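/- Let n ≥ 3, let R > 0, and let θ : Fin n → ℝ be antitone (i ≤ j implies θ i ≥ θ j) with θ 0 = π and θ (n−1) = 0. Define the polygon vertices A i = P_R(θ i) for i : Fin n, so A₀ = (−R, 0), A_{n−1} = (R, 0), and all vertices lie on the upper semicircle with the side A₀A_{n−1} as diameter. Then (dist A₀ A_{n−1})² = Σ_{k=0}^{n−2} (dist A_k A_{k+1})² + 2 · Σ_{k=0}^{n−4} (dist A₀ A_{k+1}) · (dist A_{k+1} A_{k+2}) · (dist A_{k+2} A_{n−1}) / (dist A₀ A_{n−1}). -/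

import Mathlib

noncomputable def P (R θ : ℝ) : EuclideanSpace ℝ (Fin 2) :=
  (WithLp.equiv 2 (Fin 2 → ℝ)).symm ![R * Real.cos θ, R * Real.sin θ]

open Real Finset

lemma dist_P (R : ℝ) (hR : 0 ≤ R) (α β : ℝ) (hle : β ≤ α) (h2 : α - β ≤ 2*Real.pi) :
    dist (P R α) (P R β) = 2*R*Real.sin ((α-β)/2) := by
  have hs : 0 ≤ Real.sin ((α-β)/2) :=
    Real.sin_nonneg_of_nonneg_of_le_pi (by linarith) (by linarith)
  rw [EuclideanSpace.dist_eq]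
  simp only [Real.dist_eq, sq_abs]
  have h1 : ∑ i, (P R α i - P R β i)^2 = (2*R*Real.sin ((α-β)/2))^2 := by
    simp only [P, WithLp.equiv_symm_apply, PiLp.toLp_apply, Fin.sum_univ_two, Matrix.cons_val_zero,
      Matrix.cons_val_one, Matrix.head_cons]
    have hc := Real.cos_sub α β
    have h3 : Real.cos ((α-β)/2)^2 = 1/2 + Real.cos (α-β)/2 := by
      have h4 := Real.cos_sq ((α-β)/2)
      rwa [show 2*((α-β)/2) = α-β by ring] at h4
    linear_combination R^2*Real.sin_sq_add_cos_sq α + R^2*Real.sin_sq_add_cos_sq β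
      + 2*R^2*hc - 4*R^2*Real.sin_sq_add_cos_sq ((α-β)/2) + 4*R^2*h3
  rw [h1, Real.sqrt_sq (by positivity)]

lemma step (a b : ℝ) : Real.sin (a-b)^2
    + 2 * (Real.cos a * (Real.sin (a-b) * Real.sin b))
    = Real.sin a^2 - Real.sin b^2 := by
  rw [Real.sin_sub]
  linear_combination (Real.sin a^2)*Real.sin_sq_add_cos_sq b
    - (Real.sin b^2)*Real.sin_sq_add_cos_sq a

lemma key (m : ℕ) (φ : ℕ → ℝ) (h0 : φ 0 = Real.pi/2) (hm : φ (m+2) = 0) :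
    (∑ k ∈ range (m+2), Real.sin (φ k - φ (k+1))^2)
      + 2 * ∑ k ∈ range m,
          Real.cos (φ (k+1)) * (Real.sin (φ (k+1) - φ (k+2)) * Real.sin (φ (k+2))) = 1 := by
  have hsplit : ∑ k ∈ range (m+2), Real.sin (φ k - φ (k+1))^2
      = ((∑ k ∈ range m, Real.sin (φ (k+1) - φ (k+2))^2)
          + Real.sin (φ (m+1) - φ (m+2))^2) + Real.sin (φ 0 - φ 1)^2 := by
    rw [Finset.sum_range_succ', Finset.sum_range_succ]
  have hcomb : (∑ k ∈ range m, Real.sin (φ (k+1) - φ (k+2))^2)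
      + 2 * ∑ k ∈ range m,
          Real.cos (φ (k+1)) * (Real.sin (φ (k+1) - φ (k+2)) * Real.sin (φ (k+2)))
      = Real.sin (φ 1)^2 - Real.sin (φ (m+1))^2 := by
    rw [Finset.mul_sum, ← Finset.sum_add_distrib,
      Finset.sum_congr rfl (fun k _ => step (φ (k+1)) (φ (k+2)))]
    exact Finset.sum_range_sub' (fun k => Real.sin (φ (k+1))^2) m
  have e1 : Real.sin (φ (m+1) - φ (m+2))^2 = Real.sin (φ (m+1))^2 := by rw [hm, sub_zero]
  have e2 : Real.sin (φ 0 - φ 1)^2 = Real.cos (φ 1)^2 := by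
    rw [h0, Real.sin_pi_div_two_sub]
  have e3 := Real.sin_sq_add_cos_sq (φ 1)
  rw [hsplit, e1, e2]
  linarith [hcomb]

theorem polygon_pythagoras (n : ℕ) (hn : 3 ≤ n) (R : ℝ) (hR : 0 < R)
    (θ : ℕ → ℝ)
    (hanti : ∀ i j, i ≤ j → j < n → θ j ≤ θ i)
    (h0 : θ 0 = Real.pi) (hlast : θ (n - 1) = 0)
    (A : ℕ → EuclideanSpace ℝ (Fin 2)) (hA : ∀ i, A i = P R (θ i)) :
    (dist (A 0) (A (n - 1))) ^ 2 =
      (∑ k ∈ Finset.range (n - 1), (dist (A k) (A (k + 1))) ^ 2) +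
        2 * ∑ k ∈ Finset.range (n - 3),
          dist (A 0) (A (k + 1)) * dist (A (k + 1)) (A (k + 2)) *
            dist (A (k + 2)) (A (n - 1)) / dist (A 0) (A (n - 1)) := by
  obtain ⟨m, rfl⟩ : ∃ m, n = m + 3 := ⟨n - 3, by omega⟩
  have e1 : m + 3 - 1 = m + 2 := rfl
  have e3 : m + 3 - 3 = m := rfl
  rw [e1] at hlast
  rw [e1, e3]
  have hpi := Real.pi_pos
  have hbound : ∀ i, i < m + 3 → 0 ≤ θ i ∧ θ i ≤ Real.pi := by
    intro i hi
    constructor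
    · have h := hanti i (m+2) (by omega) (by omega); linarith
    · have h := hanti 0 i (Nat.zero_le _) hi; linarith
  have hd : ∀ i j, i ≤ j → j < m+3 → dist (A i) (A j) = 2*R*Real.sin ((θ i - θ j)/2) := by
    intro i j hij hj
    have h1 := hbound i (lt_of_le_of_lt hij hj)
    have h2 := hbound j hj
    rw [hA, hA, dist_P R hR.le _ _ (hanti i j hij hj) (by linarith)]
  have hmain : dist (A 0) (A (m+2)) = 2*R := by
    rw [hd 0 (m+2) (by omega) (by omega), h0, hlast,
      show (Real.pi - 0)/2 = Real.pi/2 by ring, Real.sin_pi_div_two]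
    ring
  have hs1 : ∀ k ∈ Finset.range (m+2), dist (A k) (A (k+1))^2
      = 4*R^2 * Real.sin (θ k/2 - θ (k+1)/2)^2 := by
    intro k hk
    rw [Finset.mem_range] at hk
    rw [hd k (k+1) (by omega) (by omega), show (θ k - θ (k+1))/2 = θ k/2 - θ (k+1)/2 by ring]
    ring
  have hs2 : ∀ k ∈ Finset.range m,
      dist (A 0) (A (k+1)) * dist (A (k+1)) (A (k+2)) * dist (A (k+2)) (A (m+2))
        / dist (A 0) (A (m+2))
      = 4*R^2 * (Real.cos (θ (k+1)/2)
          * (Real.sin (θ (k+1)/2 - θ (k+2)/2) * Real.sin (θ (k+2)/2))) := by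
    intro k hk
    rw [Finset.mem_range] at hk
    rw [hd 0 (k+1) (by omega) (by omega), hd (k+1) (k+2) (by omega) (by omega),
      hd (k+2) (m+2) (by omega) (by omega), hmain, h0, hlast,
      show (Real.pi - θ (k+1))/2 = Real.pi/2 - θ (k+1)/2 by ring,
      Real.sin_pi_div_two_sub,
      show (θ (k+1) - θ (k+2))/2 = θ (k+1)/2 - θ (k+2)/2 by ring,
      show (θ (k+2) - 0)/2 = θ (k+2)/2 by ring]
    field_simp
    ring
  rw [Finset.sum_congr rfl hs1, Finset.sum_congr rfl hs2, hmain,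
    ← Finset.mul_sum, ← Finset.mul_sum]
  have hkey := key m (fun k => θ k / 2) (by simp [h0]) (by simp [hlast])
  beta_reduce at hkey
  linear_combination (-4*R^2) * hkey
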